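/- Let ℓ be a prime not dividing N and let d be a positive divisor of N with gcd(d, N/d) = 1. Let s = [[ℓ,0,0],[0,1,0],[b,c,ℓ₃]] be a lower-triangular integer matrix with ℓ₃ ∈ {1, ℓ}. Then there exists γ ∈ Γ₀(3,N) of the form [[A,B,0],[C,D,0],[0,0,1]] such that sγ ∈ P_d, and the matrix x = g_d s γ g_d⁻¹ ∈ P₀ satisfies x₁₁ = 1 and ψ₀²(x) = [[ℓ, 0],[−bd + cℓ, ℓ₃]]. -/

import Mathlib

open Matrix

/-- `Γ₀(3,N)`: 3×3 integer matrices of determinant `1` whose first row is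
`≡ (∗,0,0) (mod N)`. -/
def Gamma03 (N : ℕ) : Set (Matrix (Fin 3) (Fin 3) ℤ) :=
  {g | g.det = 1 ∧ (N : ℤ) ∣ g 0 1 ∧ (N : ℤ) ∣ g 0 2}

/-- `g_x`: the 3×3 identity matrix with its `(1,2)` entry replaced by `x`. -/
def g3 (x : ℤ) : Matrix (Fin 3) (Fin 3) ℤ := !![1, x, 0; 0, 1, 0; 0, 0, 1]

/-- Conjugation `g_d m g_d⁻¹` (note `g_d⁻¹ = g_{-d}`). -/
def conj3 (d : ℤ) (m : Matrix (Fin 3) (Fin 3) ℤ) : Matrix (Fin 3) (Fin 3) ℤ :=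
  g3 d * m * g3 (-d)

/-- `ψ₀²`: the lower-right 2×2 block. -/
def psi02 (m : Matrix (Fin 3) (Fin 3) ℤ) : Matrix (Fin 2) (Fin 2) ℤ :=
  !![m 1 1, m 1 2; m 2 1, m 2 2]

/-- case 2 of Theorem calcx: `ℓ₁ = ℓ`, `ℓ₂ = 1`, `a = 0`. -/
theorem stmt9 (N : ℕ) (hN : 0 < N) (ℓ : ℕ) (hℓ : ℓ.Prime) (hℓN : ¬ ℓ ∣ N)
    (d : ℕ) (hd : 0 < d) (hdvd : d ∣ N) (hgcd : Nat.gcd d (N / d) = 1)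
    (ℓ₃ b c : ℤ) (h3 : ℓ₃ = 1 ∨ ℓ₃ = (ℓ : ℤ)) :
    ∃ A B C D : ℤ, ∃ x : Matrix (Fin 3) (Fin 3) ℤ,
      (!![A, B, 0; C, D, 0; 0, 0, 1] : Matrix (Fin 3) (Fin 3) ℤ) ∈ Gamma03 N ∧
      x = conj3 (d : ℤ)
        (!![(ℓ : ℤ), 0, 0; 0, 1, 0; b, c, ℓ₃] * !![A, B, 0; C, D, 0; 0, 0, 1]) ∧
      x.det ≠ 0 ∧ (∀ j : Fin 3, j ≠ 0 → x 0 j = 0) ∧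
      x 0 0 = 1 ∧ psi02 x = !![(ℓ : ℤ), 0; -b * (d : ℤ) + c * (ℓ : ℤ), ℓ₃] := by
  set M : ℤ := ((N / d : ℕ) : ℤ) with hM
  have hdM : (d : ℤ) * M = (N : ℤ) := by
    rw [hM]; exact_mod_cast Nat.mul_div_cancel' hdvd
  have hcop1 : IsCoprime (ℓ : ℤ) (d : ℤ) := by
    rw [Int.isCoprime_iff_gcd_eq_one]
    exact_mod_cast (Nat.Prime.coprime_iff_not_dvd hℓ).mpr (fun h => hℓN (h.trans hdvd))
  have hcop2 : IsCoprime M (d : ℤ) := by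
    rw [Int.isCoprime_iff_gcd_eq_one, hM]
    exact_mod_cast Nat.coprime_comm.mp hgcd
  obtain ⟨u, v, huv⟩ := hcop1.mul_left hcop2
  set A : ℤ := 1 + M * u * (1 - ℓ) with hA
  set B : ℤ := (N : ℤ) * (u * (1 - ℓ)) with hB
  set C : ℤ := -(ℓ - 1) * v with hC
  set D : ℤ := ℓ + d * C with hD
  have hkey : (ℓ : ℤ) * A + d * C = 1 := by
    rw [hA, hC]; linear_combination (1 - (ℓ : ℤ)) * huv
  have hBd : B = (d : ℤ) * (A - 1) := by
    rw [hB, hA]; linear_combination u * (1 - (ℓ:ℤ)) * hdM.symm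
  have hDd : D = (ℓ : ℤ) + d * C := hD
  have hNB : (N : ℤ) ∣ B := ⟨u * (1 - ℓ), hB⟩
  clear_value A B C D M
  have hℓ0 : (ℓ : ℤ) ≠ 0 := by exact_mod_cast hℓ.ne_zero
  have h30 : ℓ₃ ≠ 0 := by rcases h3 with h | h <;> simp [h, hℓ0, hℓ.ne_zero]
  have hx : conj3 (d : ℤ)
      (!![(ℓ : ℤ), 0, 0; 0, 1, 0; b, c, ℓ₃] * !![A, B, 0; C, D, 0; 0, 0, 1])
      = !![1, 0, 0; C, ℓ, 0; b*A + c*C, -b*d + c*ℓ, ℓ₃] := by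
    unfold conj3 g3
    ext i j
    fin_cases i <;> fin_cases j <;>
      simp [Matrix.mul_apply, Fin.sum_univ_three, Matrix.vecHead, Matrix.vecTail]
    · linear_combination hkey
    · linear_combination (ℓ : ℤ) * hBd + (d : ℤ) * hDd
    · linear_combination hDd
    · linear_combination b * hBd + c * hDd
  refine ⟨A, B, C, D, _, ⟨?_, hNB, ⟨0, by simp⟩⟩, rfl, ?_, ?_, ?_, ?_⟩
  · rw [Matrix.det_fin_three]
    norm_num
    simp only [Matrix.cons_val_two, Matrix.vecHead, Matrix.vecTail, Function.comp_apply, Matrix.cons_val_succ, Matrix.cons_val_zero]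
    rw [hDd, hBd]; linear_combination hkey
  · rw [hx, Matrix.det_fin_three]
    norm_num
    simp only [Matrix.cons_val_two, Matrix.vecHead, Matrix.vecTail, Function.comp_apply, Matrix.cons_val_succ, Matrix.cons_val_zero]
    norm_num
    exact ⟨fun h => hℓ.ne_zero h, h30⟩
  · intro j hj
    rw [hx]
    fin_cases j
    · exact absurd rfl hj
    · simp
    · simp
  · rw [hx]; simp
  · rw [hx]; unfold psi02; norm_num
    simp only [Matrix.cons_val_two, Matrix.vecHead, Matrix.vecTail, Function.comp_apply, Matrix.cons_val_succ, Matrix.cons_val_zero]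
    norm_num
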